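/- Let $q,a,b,d$ be complex numbers with all relevant denominators nonzero, and define $B_k = \frac{(b; q^2)_k\,(d; q^2)_k}{(q^3a/b; q^3)_k\,(q^3a/d; q^3)_k} \cdot \frac{(b^2d^2/q^6a; q^3)_k\,(q^{12}a^3/b^3d^3; q^3)_k}{(q^9a^2/b^2d^2; q^2)_k\,(b^3d^3/q^9a^2; q^2)_k}$ for $k \ge 0$. Then for every $k \ge 0$, the forward difference satisfies $B_{k+1} - B_k = -\frac{(1-q^{3+5k}a)(1-q^{3+k}a/bd)(1-q^9a^2/b^2d^3)(1-q^9a^2/b^3d^2)}{(1-q^3a/b)(1-q^3a/d)(1-q^9a^2/b^2d^2)(1-q^9a^2/b^3d^3)} \cdot \frac{(b; q^2)_k\,(d; q^2)_k}{(q^{11}a^2/b^2d^2; q^2)_k\,(b^3d^3/q^7a^2; q^2)_k} \cdot \frac{(b^2d^2/q^6a; q^3)_k\,(q^{12}a^3/b^3d^3; q^3)_k}{(q^6a/b; q^3)_k\,(q^6a/d; q^3)_k}\, q^{2k}$. -/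

import Mathlib

/-- The finite `q`-shifted factorial `(x; p)_k`. -/
noncomputable def qp (x p : ℂ) (k : ℕ) : ℂ := ∏ j ∈ Finset.range k, (1 - x * p ^ j)

lemma qp_succ (x p : ℂ) (k : ℕ) : qp x p (k+1) = qp x p k * (1 - x * p ^ k) :=
  Finset.prod_range_succ _ _

lemma qp_mul (x p : ℂ) (k : ℕ) : (1 - x) * qp (x*p) p k = qp x p k * (1 - x * p ^ k) := by
  rw [← qp_succ]
  unfold qp
  rw [Finset.prod_range_succ']
  simp [pow_succ, mul_comm, mul_assoc, mul_left_comm]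

lemma qp_shift (x p : ℂ) (k : ℕ) (h : (1 - x) ≠ 0) :
    qp (x*p) p k = qp x p k * (1 - x * p ^ k) / (1 - x) := by
  field_simp
  rw [mul_comm, qp_mul]

lemma L1 (P1 P2 Q1 Q2 R1 R2 S1 S2 n1 n2 n3 n4 d1 d2 d3 d4 : ℂ)
    (hQ1 : Q1 ≠ 0) (hQ2 : Q2 ≠ 0) (hS1 : S1 ≠ 0) (hS2 : S2 ≠ 0)
    (hd1 : d1 ≠ 0) (hd2 : d2 ≠ 0) (hd3 : d3 ≠ 0) (hd4 : d4 ≠ 0) :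
    P1 * n1 * (P2 * n2) / (Q1 * d1 * (Q2 * d2)) * (R1 * n3 * (R2 * n4) / (S1 * d3 * (S2 * d4)))
      - P1 * P2 / (Q1 * Q2) * (R1 * R2 / (S1 * S2))
    = P1 * P2 * R1 * R2 * (n1 * n2 * n3 * n4 - d1 * d2 * d3 * d4)
        / (Q1 * Q2 * S1 * S2 * (d1 * d2 * d3 * d4)) := by
  rw [div_mul_div_comm, div_mul_div_comm,
    div_sub_div _ _
      (mul_ne_zero (mul_ne_zero (mul_ne_zero hQ1 hd1) (mul_ne_zero hQ2 hd2))
        (mul_ne_zero (mul_ne_zero hS1 hd3) (mul_ne_zero hS2 hd4)))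
      (mul_ne_zero (mul_ne_zero hQ1 hQ2) (mul_ne_zero hS1 hS2)),
    div_eq_div_iff
      (mul_ne_zero
        (mul_ne_zero (mul_ne_zero (mul_ne_zero hQ1 hd1) (mul_ne_zero hQ2 hd2))
          (mul_ne_zero (mul_ne_zero hS1 hd3) (mul_ne_zero hS2 hd4)))
        (mul_ne_zero (mul_ne_zero hQ1 hQ2) (mul_ne_zero hS1 hS2)))
      (mul_ne_zero (mul_ne_zero (mul_ne_zero (mul_ne_zero hQ1 hQ2) hS1) hS2)
        (mul_ne_zero (mul_ne_zero (mul_ne_zero hd1 hd2) hd3) hd4))]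
  ring

lemma L2 (P1 P2 Q1 Q2 R1 R2 S1 S2 d1 d2 d3 d4 g1 g2 g3 g4 e4 C t2 : ℂ)
    (hQ1 : Q1 ≠ 0) (hQ2 : Q2 ≠ 0) (hS1 : S1 ≠ 0) (hS2 : S2 ≠ 0)
    (hd1 : d1 ≠ 0) (hd2 : d2 ≠ 0) (hd3 : d3 ≠ 0) (hd4 : d4 ≠ 0)
    (hg1 : g1 ≠ 0) (hg2 : g2 ≠ 0) (hg3 : g3 ≠ 0) (hg4 : g4 ≠ 0) (he4 : e4 ≠ 0) :
    -(C / (g1 * g2 * g3 * e4))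
        * (P1 * P2 / (S1 * d3 / g3 * (S2 * d4 / g4)))
        * (R1 * R2 / (Q1 * d1 / g1 * (Q2 * d2 / g2))) * t2
    = P1 * P2 * R1 * R2 * (-(C * g4 / e4 * t2))
        / (Q1 * Q2 * S1 * S2 * (d1 * d2 * d3 * d4)) := by
  rw [show P1 * P2 * R1 * R2 * (-(C * g4 / e4 * t2))
      = -(P1 * P2 * R1 * R2 * (C * g4 * t2)) / e4 by
    rw [div_mul_eq_mul_div, mul_neg, ← mul_div_assoc, ← neg_div], div_div]
  rw [div_mul_div_comm (S1 * d3), div_mul_div_comm (Q1 * d1), div_div_eq_mul_div,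
    div_div_eq_mul_div, ← neg_div, div_mul_div_comm, div_mul_div_comm, div_mul_eq_mul_div,
    div_eq_div_iff
      (mul_ne_zero
        (mul_ne_zero (mul_ne_zero (mul_ne_zero (mul_ne_zero hg1 hg2) hg3) he4)
          (mul_ne_zero (mul_ne_zero hS1 hd3) (mul_ne_zero hS2 hd4)))
        (mul_ne_zero (mul_ne_zero hQ1 hd1) (mul_ne_zero hQ2 hd2)))
      (mul_ne_zero he4
        (mul_ne_zero (mul_ne_zero (mul_ne_zero (mul_ne_zero hQ1 hQ2) hS1) hS2)
          (mul_ne_zero (mul_ne_zero (mul_ne_zero hd1 hd2) hd3) hd4)))]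
  ring

set_option maxHeartbeats 1000000 in
lemma key (q a b d t : ℂ) (hq : q ≠ 0) (ha : a ≠ 0) (hb : b ≠ 0) (hd : d ≠ 0)
    (h4 : (1 - q ^ 9 * a ^ 2 / (b ^ 3 * d ^ 3)) ≠ 0) :
    (1 - b * t ^ 2) * (1 - d * t ^ 2) * (1 - b ^ 2 * d ^ 2 / (q ^ 6 * a) * t ^ 3)
        * (1 - q ^ 12 * a ^ 3 / (b ^ 3 * d ^ 3) * t ^ 3)
      - (1 - q ^ 3 * a / b * t ^ 3) * (1 - q ^ 3 * a / d * t ^ 3)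
        * (1 - q ^ 9 * a ^ 2 / (b ^ 2 * d ^ 2) * t ^ 2)
        * (1 - b ^ 3 * d ^ 3 / (q ^ 9 * a ^ 2) * t ^ 2)
    = -((1 - q ^ 3 * t ^ 5 * a) * (1 - q ^ 3 * t * a / (b * d))
          * (1 - q ^ 9 * a ^ 2 / (b ^ 2 * d ^ 3)) * (1 - q ^ 9 * a ^ 2 / (b ^ 3 * d ^ 2))
          * (1 - b ^ 3 * d ^ 3 / (q ^ 9 * a ^ 2)) / (1 - q ^ 9 * a ^ 2 / (b ^ 3 * d ^ 3))
          * t ^ 2) := by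
  have k1 : q ^ 6 * a ≠ 0 := mul_ne_zero (pow_ne_zero _ hq) ha
  have k2 : q ^ 9 * a ^ 2 ≠ 0 := mul_ne_zero (pow_ne_zero _ hq) (pow_ne_zero _ ha)
  have k3 : b * d ≠ 0 := mul_ne_zero hb hd
  have k4 : b ^ 2 * d ^ 2 ≠ 0 := mul_ne_zero (pow_ne_zero _ hb) (pow_ne_zero _ hd)
  have k5 : b ^ 3 * d ^ 3 ≠ 0 := mul_ne_zero (pow_ne_zero _ hb) (pow_ne_zero _ hd)
  have k6 : b ^ 2 * d ^ 3 ≠ 0 := mul_ne_zero (pow_ne_zero _ hb) (pow_ne_zero _ hd)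
  have k7 : b ^ 3 * d ^ 2 ≠ 0 := mul_ne_zero (pow_ne_zero _ hb) (pow_ne_zero _ hd)
  rw [show -((1 - q ^ 3 * t ^ 5 * a) * (1 - q ^ 3 * t * a / (b * d))
          * (1 - q ^ 9 * a ^ 2 / (b ^ 2 * d ^ 3)) * (1 - q ^ 9 * a ^ 2 / (b ^ 3 * d ^ 2))
          * (1 - b ^ 3 * d ^ 3 / (q ^ 9 * a ^ 2)) / (1 - q ^ 9 * a ^ 2 / (b ^ 3 * d ^ 3))
          * t ^ 2)
      = -((1 - q ^ 3 * t ^ 5 * a) * (1 - q ^ 3 * t * a / (b * d))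
          * (1 - q ^ 9 * a ^ 2 / (b ^ 2 * d ^ 3)) * (1 - q ^ 9 * a ^ 2 / (b ^ 3 * d ^ 2))
          * (1 - b ^ 3 * d ^ 3 / (q ^ 9 * a ^ 2)) * t ^ 2)
          / (1 - q ^ 9 * a ^ 2 / (b ^ 3 * d ^ 3)) by
    rw [div_mul_eq_mul_div, neg_div], eq_div_iff h4]
  field_simp
  ring

set_option maxHeartbeats 1000000 in
/-- Forward difference of the sequence `B` from Section 2.1. -/
theorem forward_difference_B_section21 (q a b d : ℂ)
    (hq : q ≠ 0) (ha : a ≠ 0) (hb : b ≠ 0) (hd : d ≠ 0)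
    (hden : ∀ k : ℕ,
      qp (q ^ 3 * a / b) (q ^ 3) k ≠ 0 ∧ qp (q ^ 3 * a / d) (q ^ 3) k ≠ 0 ∧
      qp (q ^ 9 * a ^ 2 / (b ^ 2 * d ^ 2)) (q ^ 2) k ≠ 0 ∧
      qp (b ^ 3 * d ^ 3 / (q ^ 9 * a ^ 2)) (q ^ 2) k ≠ 0 ∧
      qp (q ^ 11 * a ^ 2 / (b ^ 2 * d ^ 2)) (q ^ 2) k ≠ 0 ∧
      qp (b ^ 3 * d ^ 3 / (q ^ 7 * a ^ 2)) (q ^ 2) k ≠ 0 ∧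
      qp (q ^ 6 * a / b) (q ^ 3) k ≠ 0 ∧ qp (q ^ 6 * a / d) (q ^ 3) k ≠ 0)
    (hlin : (1 - q ^ 3 * a / b) ≠ 0 ∧ (1 - q ^ 3 * a / d) ≠ 0 ∧
      (1 - q ^ 9 * a ^ 2 / (b ^ 2 * d ^ 2)) ≠ 0 ∧
      (1 - q ^ 9 * a ^ 2 / (b ^ 3 * d ^ 3)) ≠ 0) :
    ∀ k : ℕ,
      (fun j : ℕ =>
          qp b (q ^ 2) j * qp d (q ^ 2) j
            / (qp (q ^ 3 * a / b) (q ^ 3) j * qp (q ^ 3 * a / d) (q ^ 3) j)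
          * (qp (b ^ 2 * d ^ 2 / (q ^ 6 * a)) (q ^ 3) j
              * qp (q ^ 12 * a ^ 3 / (b ^ 3 * d ^ 3)) (q ^ 3) j
            / (qp (q ^ 9 * a ^ 2 / (b ^ 2 * d ^ 2)) (q ^ 2) j
                * qp (b ^ 3 * d ^ 3 / (q ^ 9 * a ^ 2)) (q ^ 2) j))) (k + 1)
        - (fun j : ℕ =>
          qp b (q ^ 2) j * qp d (q ^ 2) j
            / (qp (q ^ 3 * a / b) (q ^ 3) j * qp (q ^ 3 * a / d) (q ^ 3) j)
          * (qp (b ^ 2 * d ^ 2 / (q ^ 6 * a)) (q ^ 3) j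
              * qp (q ^ 12 * a ^ 3 / (b ^ 3 * d ^ 3)) (q ^ 3) j
            / (qp (q ^ 9 * a ^ 2 / (b ^ 2 * d ^ 2)) (q ^ 2) j
                * qp (b ^ 3 * d ^ 3 / (q ^ 9 * a ^ 2)) (q ^ 2) j))) k =
      -((1 - q ^ (3 + 5 * k) * a) * (1 - q ^ (3 + k) * a / (b * d))
            * (1 - q ^ 9 * a ^ 2 / (b ^ 2 * d ^ 3)) * (1 - q ^ 9 * a ^ 2 / (b ^ 3 * d ^ 2))
          / ((1 - q ^ 3 * a / b) * (1 - q ^ 3 * a / d)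
              * (1 - q ^ 9 * a ^ 2 / (b ^ 2 * d ^ 2))
              * (1 - q ^ 9 * a ^ 2 / (b ^ 3 * d ^ 3))))
        * (qp b (q ^ 2) k * qp d (q ^ 2) k
            / (qp (q ^ 11 * a ^ 2 / (b ^ 2 * d ^ 2)) (q ^ 2) k
                * qp (b ^ 3 * d ^ 3 / (q ^ 7 * a ^ 2)) (q ^ 2) k))
        * (qp (b ^ 2 * d ^ 2 / (q ^ 6 * a)) (q ^ 3) k
            * qp (q ^ 12 * a ^ 3 / (b ^ 3 * d ^ 3)) (q ^ 3) k
          / (qp (q ^ 6 * a / b) (q ^ 3) k * qp (q ^ 6 * a / d) (q ^ 3) k))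
        * q ^ (2 * k) := by
  obtain ⟨h1, h2, h3, h4⟩ := hlin
  intro k
  simp only []
  obtain ⟨hQ1, hQ2, hS1, hS2, -, -, -, -⟩ := hden k
  obtain ⟨hQ1', hQ2', hS1', hS2', -, -, -, -⟩ := hden (k+1)
  rw [qp_succ] at hQ1' hQ2' hS1' hS2'
  have f1 : (1 - q^3*a/b * (q^3)^k) ≠ 0 := right_ne_zero_of_mul hQ1'
  have f2 : (1 - q^3*a/d * (q^3)^k) ≠ 0 := right_ne_zero_of_mul hQ2'
  have f3 : (1 - q^9*a^2/(b^2*d^2) * (q^2)^k) ≠ 0 := right_ne_zero_of_mul hS1'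
  have f4 : (1 - b^3*d^3/(q^9*a^2) * (q^2)^k) ≠ 0 := right_ne_zero_of_mul hS2'
  have h5 : (1 - b^3*d^3/(q^9*a^2)) ≠ 0 := by
    have := (hden 1).2.2.2.1
    simpa [qp] using this
  have e1 : q^11*a^2/(b^2*d^2) = q^9*a^2/(b^2*d^2) * q^2 := by ring
  have e2 : b^3*d^3/(q^7*a^2) = b^3*d^3/(q^9*a^2) * q^2 := by
    field_simp
  have e3 : q^6*a/b = q^3*a/b * q^3 := by ring
  have e4 : q^6*a/d = q^3*a/d * q^3 := by ring
  rw [e1, e2, e3, e4, qp_shift _ _ _ h3, qp_shift _ _ _ h5, qp_shift _ _ _ h1,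
    qp_shift _ _ _ h2]
  simp only [qp_succ]
  have p1 : (q^2)^k = (q^k)^2 := pow_right_comm q 2 k
  have p2 : (q^3)^k = (q^k)^3 := pow_right_comm q 3 k
  have p3 : q^(3+5*k) = q^3 * (q^k)^5 := by rw [pow_add, mul_comm 5 k, pow_mul]
  have p4 : q^(3+k) = q^3 * q^k := by rw [pow_add]
  have p5 : q^(2*k) = (q^k)^2 := by rw [mul_comm, pow_mul]
  simp only [p1, p2, p3, p4, p5] at f1 f2 f3 f4 ⊢
  rw [L1 (qp b (q^2) k) (qp d (q^2) k) (qp (q^3*a/b) (q^3) k) (qp (q^3*a/d) (q^3) k)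
      (qp (b^2*d^2/(q^6*a)) (q^3) k) (qp (q^12*a^3/(b^3*d^3)) (q^3) k)
      (qp (q^9*a^2/(b^2*d^2)) (q^2) k) (qp (b^3*d^3/(q^9*a^2)) (q^2) k)
      (1 - b*(q^k)^2) (1 - d*(q^k)^2) (1 - b^2*d^2/(q^6*a)*(q^k)^3)
      (1 - q^12*a^3/(b^3*d^3)*(q^k)^3)
      (1 - q^3*a/b*(q^k)^3) (1 - q^3*a/d*(q^k)^3) (1 - q^9*a^2/(b^2*d^2)*(q^k)^2)
      (1 - b^3*d^3/(q^9*a^2)*(q^k)^2)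
      hQ1 hQ2 hS1 hS2 f1 f2 f3 f4,
    L2 (qp b (q^2) k) (qp d (q^2) k) (qp (q^3*a/b) (q^3) k) (qp (q^3*a/d) (q^3) k)
      (qp (b^2*d^2/(q^6*a)) (q^3) k) (qp (q^12*a^3/(b^3*d^3)) (q^3) k)
      (qp (q^9*a^2/(b^2*d^2)) (q^2) k) (qp (b^3*d^3/(q^9*a^2)) (q^2) k)
      (1 - q^3*a/b*(q^k)^3) (1 - q^3*a/d*(q^k)^3) (1 - q^9*a^2/(b^2*d^2)*(q^k)^2)
      (1 - b^3*d^3/(q^9*a^2)*(q^k)^2)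
      (1 - q^3*a/b) (1 - q^3*a/d) (1 - q^9*a^2/(b^2*d^2)) (1 - b^3*d^3/(q^9*a^2))
      (1 - q^9*a^2/(b^3*d^3))
      ((1 - q^3*(q^k)^5*a) * (1 - q^3*q^k*a/(b*d)) * (1 - q^9*a^2/(b^2*d^3))
        * (1 - q^9*a^2/(b^3*d^2)))
      ((q^k)^2)
      hQ1 hQ2 hS1 hS2 f1 f2 f3 f4 h1 h2 h3 h5 h4,
    key q a b d (q^k) hq ha hb hd h4]
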